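/- (Alexandroff–Urysohn) Let λ be a regular cardinal. A topological space X is [λ, λ]-compact if and only if every subset A ⊆ X with |A| = λ has a complete accumulation point, i.e., a point x such that every open neighborhood U of x satisfies |U ∩ A| = |A|. -/

import Mathlib

open Cardinal Set

universe u

lemma aux_mk_toType (l : Cardinal.{u}) : #((Cardinal.ord l).ToType) = l := by
  rw [Cardinal.mk_toType, Cardinal.card_ord]

lemma aux_bounded {l : Cardinal.{u}} (hl : l.IsRegular)
    (s : Set (Cardinal.ord l).ToType) (hs : #s < l) : ∃ m, ∀ i ∈ s, i < m := by
  have h := Order.cof_le (α := (Cardinal.ord l).ToType) (s := s)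
  rw [Ordinal.cof_toType, hl.cof_eq] at h
  by_contra hne
  push_neg at hne
  exact absurd (h fun a => by obtain ⟨b, hb, hab⟩ := hne a; exact ⟨b, hb, hab⟩) (not_le.mpr hs)

lemma aux_Iio {l : Cardinal.{u}} (b : (Cardinal.ord l).ToType) : #(Set.Iio b) < l := by
  have h1 : #(Set.Iio b) =
      (@Ordinal.typein (Cardinal.ord l).ToType (· < ·) isWellOrder_lt b).card :=
    @Ordinal.card_typein _ (· < ·) isWellOrder_lt b
  rw [h1, ← Cardinal.lt_ord]
  exact Ordinal.typein_lt_self b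

lemma aux_Iic {l : Cardinal.{u}} (hl : l.IsRegular) (b : (Cardinal.ord l).ToType) :
    #(Set.Iic b) < l := by
  have hsub : Set.Iic b ⊆ insert b (Set.Iio b) := by
    intro i hi
    rcases eq_or_lt_of_le (Set.mem_Iic.mp hi) with rfl | h
    · exact Set.mem_insert _ _
    · exact Set.mem_insert_of_mem _ h
  calc #(Set.Iic b) ≤ #(insert b (Set.Iio b) : Set _) := Cardinal.mk_le_mk_of_subset hsub
    _ ≤ #(Set.Iio b) + 1 := Cardinal.mk_insert_le
    _ < l := Cardinal.add_lt_of_lt hl.aleph0_le (aux_Iio b) (lt_of_lt_of_le Cardinal.one_lt_aleph0 hl.aleph0_le)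

/-- `X` is `[l, l]`-compact: every open cover of cardinality `≤ l` has a
subcover of cardinality `< l`. -/
def CompactCC (l : Cardinal.{u}) (X : Type u) [TopologicalSpace X] : Prop :=
  ∀ 𝒰 : Set (Set X), (∀ U ∈ 𝒰, IsOpen U) → ⋃₀ 𝒰 = Set.univ → #𝒰 ≤ l →
    ∃ 𝒱 ⊆ 𝒰, ⋃₀ 𝒱 = Set.univ ∧ #𝒱 < l

/-- Alexandroff–Urysohn: for regular `l`, a space is `[l, l]`-compact iff every
subset of cardinality `l` has a complete accumulation point. -/
theorem stmt13 (l : Cardinal.{u}) (hl : l.IsRegular) (X : Type u)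
    [TopologicalSpace X] :
    CompactCC l X ↔
      ∀ A : Set X, #A = l →
        ∃ x : X, ∀ U : Set X, IsOpen U → x ∈ U → #(U ∩ A : Set X) = #A := by
  have hι : #((Cardinal.ord l).ToType) = l := aux_mk_toType l
  constructor
  · -- forward direction
    intro hc A hA
    by_contra h
    push_neg at h
    choose U hUo hxU hUne using h
    have hUlt : ∀ x, #(U x ∩ A : Set X) < l := by
      intro x
      refine lt_of_le_of_ne ?_ (hA ▸ hUne x)
      exact hA ▸ Cardinal.mk_le_mk_of_subset Set.inter_subset_right
    obtain ⟨e⟩ : Nonempty ((Cardinal.ord l).ToType ≃ A) :=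
      Cardinal.eq.mp (hι.trans hA.symm)
    have hS : ∀ x, ∃ m, ∀ i, (e i : X) ∈ U x → i < m := by
      intro x
      have hcard : #({i | (e i : X) ∈ U x} : Set _) < l := by
        refine lt_of_le_of_lt ?_ (hUlt x)
        refine Cardinal.mk_le_of_injective
          (f := fun i : {i | (e i : X) ∈ U x} =>
            (⟨(e i.1 : X), i.2, (e i.1).2⟩ : (U x ∩ A : Set X))) ?_
        intro i j hij
        simp only [Subtype.mk.injEq] at hij
        exact Subtype.ext (e.injective (Subtype.ext (by have h' := congrArg Subtype.val hij; exact h')))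
      obtain ⟨m, hm⟩ := aux_bounded hl _ hcard
      exact ⟨m, fun i hi => hm i hi⟩
    choose b hb using hS
    set V : (Cardinal.ord l).ToType → Set X :=
      fun m => ⋃ y ∈ {y : X | ∀ i, (e i : X) ∈ U y → i < m}, U y with hV
    have hVmono : ∀ {m m'}, m ≤ m' → V m ⊆ V m' := by
      intro m m' hmm z hz
      rw [Set.mem_iUnion₂] at hz ⊢
      obtain ⟨y, hy, hzy⟩ := hz
      exact ⟨y, fun i hi => lt_of_lt_of_le (hy i hi) hmm, hzy⟩
    have hVcov : ∀ z, z ∈ V (b z) := by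
      intro z
      rw [Set.mem_iUnion₂]
      exact ⟨z, hb z, hxU z⟩
    obtain ⟨𝒱, h𝒱U, h𝒱cov, h𝒱lt⟩ := hc (Set.range V)
      (by rintro _ ⟨m, rfl⟩; exact isOpen_biUnion fun y _ => hUo y)
      (by
        rw [Set.sUnion_eq_univ_iff]
        exact fun z => ⟨V (b z), Set.mem_range_self _, hVcov z⟩)
      (Cardinal.mk_range_le.trans_eq hι)
    choose g hg using fun W : 𝒱 => h𝒱U W.2
    obtain ⟨m₀, hm₀⟩ := aux_bounded hl (Set.range g) (Cardinal.mk_range_le.trans_lt h𝒱lt)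
    have hVuniv : V m₀ = Set.univ := by
      apply Set.eq_univ_of_forall
      intro z
      have hz : z ∈ ⋃₀ 𝒱 := h𝒱cov ▸ Set.mem_univ z
      obtain ⟨W, hW, hzW⟩ := hz
      have : g ⟨W, hW⟩ < m₀ := hm₀ _ (Set.mem_range_self _)
      refine hVmono this.le ?_
      rw [hg ⟨W, hW⟩]
      exact hzW
    have hmem : (e m₀ : X) ∈ V m₀ := hVuniv ▸ Set.mem_univ _
    rw [Set.mem_iUnion₂] at hmem
    obtain ⟨y, hy, hzy⟩ := hmem
    exact absurd (hy m₀ hzy) (lt_irrefl _)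
  · -- backward direction
    intro h 𝒰 hopen hcov hcard
    by_cases hlt : #𝒰 < l
    · exact ⟨𝒰, subset_rfl, hcov, hlt⟩
    have h𝒰 : #𝒰 = l := le_antisymm hcard (not_lt.mp hlt)
    by_contra hno
    push_neg at hno
    obtain ⟨f⟩ : Nonempty ((Cardinal.ord l).ToType ≃ 𝒰) :=
      Cardinal.eq.mp (hι.trans h𝒰.symm)
    -- pick points avoiding initial unions
    have hpick : ∀ m, ∃ z : X, z ∉ ⋃₀ ((fun b => ((f b : Set X))) '' Set.Iic m) := by
      intro m
      by_contra hz
      push_neg at hz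
      have hsub : (fun b => ((f b : Set X))) '' Set.Iic m ⊆ 𝒰 := by
        rintro _ ⟨b, _, rfl⟩; exact (f b).2
      have hcover : ⋃₀ ((fun b => ((f b : Set X))) '' Set.Iic m) = Set.univ :=
        Set.eq_univ_of_forall hz
      have hsmall : #((fun b => ((f b : Set X))) '' Set.Iic m : Set _) < l :=
        Cardinal.mk_image_le.trans_lt (aux_Iic hl m)
      exact absurd (hno _ hsub hcover) (not_le.mpr hsmall)
    choose a ha using hpick
    have key : ∀ m b, b ≤ m → a m ∉ (f b : Set X) := by
      intro m b hbm hmem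
      exact ha m ⟨(f b : Set X), ⟨b, hbm, rfl⟩, hmem⟩
    set A : Set X := Set.range a with hAdef
    have hAle : #A ≤ l := Cardinal.mk_range_le.trans_eq hι
    -- for each m, a member of the cover containing a m
    have hcm : ∀ m, ∃ c, a m ∈ (f c : Set X) := by
      intro m
      have : a m ∈ ⋃₀ 𝒰 := hcov ▸ Set.mem_univ _
      obtain ⟨W, hW, hmW⟩ := this
      refine ⟨f.symm ⟨W, hW⟩, ?_⟩
      rw [Equiv.apply_symm_apply]
      exact hmW
    choose c hc' using hcm
    have hfib : ∀ m m', a m' = a m → m' < c m := by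
      intro m m' hmm
      by_contra hle
      exact key m' (c m) (not_lt.mp hle) (hmm ▸ hc' m)
    have hAcard : #A = l := by
      refine le_antisymm hAle (not_lt.mp fun hAlt => ?_)
      choose r hr using fun x : A => (x.2 : ∃ m, a m = (x : X))
      obtain ⟨m₀, hm₀⟩ := aux_bounded hl (Set.range fun x : A => c (r x))
        (Cardinal.mk_range_le.trans_lt hAlt)
      set x₀ : A := ⟨a m₀, Set.mem_range_self _⟩
      have h1 : m₀ < c (r x₀) := hfib (r x₀) m₀ (hr x₀).symm
      have h2 : c (r x₀) < m₀ := hm₀ _ (Set.mem_range_self x₀)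
      exact absurd h1 (asymm h2)
    obtain ⟨x, hx⟩ := h A hAcard
    have hxcov : x ∈ ⋃₀ 𝒰 := hcov ▸ Set.mem_univ _
    obtain ⟨W, hW, hxW⟩ := hxcov
    have hbig : #(W ∩ A : Set X) = l := (hx W (hopen W hW) hxW).trans hAcard
    set γ := f.symm ⟨W, hW⟩ with hγ
    have hfγ : (f γ : Set X) = W := by rw [hγ, Equiv.apply_symm_apply]
    have hsub : (W ∩ A : Set X) ⊆ a '' Set.Iio γ := by
      rintro z ⟨hzW, m, rfl⟩
      refine ⟨m, ?_, rfl⟩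
      by_contra hle
      exact key m γ (not_lt.mp hle) (hfγ ▸ hzW)
    have hsmall : #(W ∩ A : Set X) < l :=
      (Cardinal.mk_le_mk_of_subset hsub).trans_lt (Cardinal.mk_image_le.trans_lt (aux_Iio γ))
    exact absurd hbig (ne_of_lt hsmall)
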